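/- Let U and V be primitive strings of length ≥ 2 over a linearly ordered alphabet, let 1 ≤ i ≤ |U| and 1 ≤ j ≤ |V| with U[i] = V[j] = c, and suppose position i is cyclic L-type in U and position j is cyclic S-type in V. Then conj_i(U) ≺_ω c ≺_ω conj_j(V), where c is regarded as a string of length 1. -/

import Mathlib

/-- `listPow S k` is the `k`-fold concatenation `S^k` of the string `S`. -/
def listPow {α : Type*} (S : List α) : ℕ → List α
  | 0 => []
  | n + 1 => S ++ listPow S n

/-- A string is primitive if `S = R^k` implies `S = R` and `k = 1`. -/
def IsPrimitiveStr {α : Type*} (S : List α) : Prop :=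
  S ≠ [] ∧ ∀ (R : List α) (k : ℕ), S = listPow R k → S = R ∧ k = 1

/-- The length of the primitive root of `S`: the least positive `d` such that
`S` is the `(|S|/d)`-th power of its length-`d` prefix. -/
noncomputable def rootLen {α : Type*} (S : List α) : ℕ :=
  sInf {d | 0 < d ∧ listPow (S.take d) (S.length / d) = S}

/-- The primitive root of a (nonempty) string `S`. -/
noncomputable def listRoot {α : Type*} (S : List α) : List α := S.take (rootLen S)

/-- `omegaSeq S hS` is the infinite sequence `S^ω` obtained by repeating the
nonempty string `S` forever; `omegaSeq S hS n = S[(n mod |S|) + 1]` (1-based). -/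
def omegaSeq {α : Type*} (S : List α) (hS : S ≠ []) (n : ℕ) : α :=
  S.get ⟨n % S.length, Nat.mod_lt n (List.length_pos_iff.mpr hS)⟩

/-- Lexicographic order on infinite sequences: they differ somewhere and at the
first differing position the left one is smaller. -/
def SeqLexLt {α : Type*} [LinearOrder α] (f g : ℕ → α) : Prop :=
  ∃ n, (∀ m, m < n → f m = g m) ∧ f n < g n

/-- The ω-order on nonempty strings: `S ≺_ω T` iff either `root S = root T` and
`|S| < |T|`, or `S^ω <_lex T^ω`. -/
def OmegaLt {α : Type*} [LinearOrder α] (S T : List α) : Prop :=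
  ∃ (hS : S ≠ []) (hT : T ≠ []),
    (listRoot S = listRoot T ∧ S.length < T.length) ∨
      SeqLexLt (omegaSeq S hS) (omegaSeq T hT)

/-- `conj T i = T[i..n]T[1..i-1]`, the `i`-th rotation (conjugate) of `T`
(1-based index, taken cyclically). -/
def conj {α : Type*} (T : List α) (i : ℕ) : List α := T.rotate (i - 1)

theorem conj_ne_nil {α : Type*} {T : List α} (hT : T ≠ []) (i : ℕ) : conj T i ≠ [] := by
  intro h
  apply hT
  have h' := congrArg List.length h
  simp only [conj, List.length_rotate, List.length_nil] at h'
  exact List.length_eq_zero_iff.mp h'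

theorem listPow_ne_nil {α : Type*} {S : List α} (hS : S ≠ []) {r : ℕ} (hr : 1 ≤ r) :
    listPow S r ≠ [] := by
  cases r with
  | zero => omega
  | succ n =>
    intro h
    exact hS (List.append_eq_nil_iff.mp h).1

/-- Lexicographic order on finite strings. -/
def LexLt {α : Type*} [LinearOrder α] (U V : List α) : Prop := List.Lex (· < ·) U V

/-- Position `i` of `T` is cyclic S-type if `conj_i(T) <_lex conj_{i+1}(T)`. -/
def SType {α : Type*} [LinearOrder α] (T : List α) (i : ℕ) : Prop :=
  LexLt (conj T i) (conj T (i + 1))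

/-- Position `i` of `T` is cyclic L-type if `conj_i(T) >_lex conj_{i+1}(T)`. -/
def LType {α : Type*} [LinearOrder α] (T : List α) (i : ℕ) : Prop :=
  LexLt (conj T (i + 1)) (conj T i)

/-- `cyc T hT i` is the character `T[i]`, 1-based and taken cyclically. -/
def cyc {α : Type*} (T : List α) (hT : T ≠ []) (i : ℕ) : α := omegaSeq T hT (i - 1)

/-- A cyclic S-type position `i` is LMS if position `i-1` (cyclically, so
position `0` means `n`) is cyclic L-type. -/
def IsLMS {α : Type*} [LinearOrder α] (T : List α) (i : ℕ) : Prop :=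
  SType T i ∧ LType T (if i = 1 then T.length else i - 1)

/-- The cyclic distance from position `i` to the first LMS position of `T`
strictly after `i` (in cyclic order). -/
noncomputable def lmsDist {α : Type*} [LinearOrder α] (T : List α) (i : ℕ) : ℕ :=
  sInf {m | 0 < m ∧ IsLMS T ((i + m - 1) % T.length + 1)}

/-- The LMS-prefix of `conj_i(T)`: the cyclic factor of `T` from position `i`
to the first LMS position strictly after `i`, inclusive at both ends. -/
noncomputable def lmsPrefix {α : Type*} [LinearOrder α] (T : List α) (i : ℕ) : List α :=
  (conj T i ++ conj T i).take (lmsDist T i + 1)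

/-- The LMS-order: `U <_LMS V` iff `V` is a proper prefix of `U`, or neither is
a prefix of the other and `U <_lex V`. -/
def LMSLt {α : Type*} [LinearOrder α] (U V : List α) : Prop :=
  (V <+: U ∧ V ≠ U) ∨ (¬ U <+: V ∧ ¬ V <+: U ∧ LexLt U V)

section Aux

variable {α : Type*}

lemma listPow_singleton (a : α) : ∀ n, listPow [a] n = List.replicate n a
  | 0 => rfl
  | n + 1 => by simp [listPow, listPow_singleton a n, List.replicate_succ]

lemma lex_of_getElem [LinearOrder α] :
    ∀ (l₁ l₂ : List α) (k : ℕ) (hk1 : k < l₁.length) (hk2 : k < l₂.length),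
      (∀ m, m < k → ∀ (h1 : m < l₁.length) (h2 : m < l₂.length), l₁[m] = l₂[m]) →
      l₁[k] < l₂[k] → List.Lex (· < ·) l₁ l₂
  | _ :: _, _ :: _, 0, _, _, _, hlt => List.Lex.rel hlt
  | a :: l₁, b :: l₂, k + 1, hk1, hk2, hagree, hlt => by
      have hab : a = b := hagree 0 (Nat.succ_pos _) (Nat.succ_pos _) (Nat.succ_pos _)
      subst hab
      exact List.Lex.cons (lex_of_getElem l₁ l₂ k (by simpa using hk1) (by simpa using hk2)
        (fun m hm h1 h2 => hagree (m + 1) (by omega) (by omega) (by omega)) (by simpa using hlt))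

/-- First position where a conjugate of a primitive string of length ≥ 2
differs from the character at its start. -/
lemma exists_first_diff [LinearOrder α] (T : List α) (hT : IsPrimitiveStr T)
    (h2 : 2 ≤ T.length) (i : ℕ) (hi1 : 1 ≤ i) (hi2 : i ≤ T.length) (c : α)
    (hc : cyc T hT.1 i = c) :
    ∃ n, 0 < n ∧ ∃ (hn : n < (conj T i).length),
      (∀ m (hm : m < (conj T i).length), m < n → (conj T i)[m] = c) ∧ (conj T i)[n] ≠ c := by
  set A := conj T i with hA
  have hAlen : A.length = T.length := by simp [hA, conj]
  have hA0 : ∀ (h : 0 < A.length), A[0] = c := by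
    intro h
    have := List.getElem_rotate T (i - 1) 0 (by simp; omega)
    simpa [hA, conj, this, cyc, omegaSeq] using hc
  have hex : ∃ m, ∃ (hm : m < A.length), A[m] ≠ c := by
    by_contra hall
    push_neg at hall
    have hrep : A = List.replicate A.length c := by
      apply List.ext_getElem (by simp)
      intro m hm _
      simpa using hall m hm
    have hTrep : T = List.replicate T.length c := by
      have hTA : T = A.rotate (T.length - (i - 1)) := by
        rw [hA, conj, List.rotate_rotate]
        have : i - 1 + (T.length - (i - 1)) = T.length := by omega
        rw [this, List.rotate_length]
      rw [hTA, hrep, List.rotate_replicate, hAlen]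
      simp
    have := (hT.2 [c] T.length (by rw [listPow_singleton]; exact hTrep)).2
    omega
  classical
  let P : ℕ → Prop := fun k => ∃ (h : k < A.length), A[k] ≠ c
  have hP : ∃ k, P k := hex
  obtain ⟨hn, hne⟩ := Nat.find_spec hP
  refine ⟨Nat.find hP, ?_, hn, ?_, hne⟩
  · rcases Nat.eq_zero_or_pos (Nat.find hP) with h0 | h0
    · exfalso
      apply hne
      have h00 : A[Nat.find hP] = A[0]'(by omega) := by simp only [h0]
      rw [h00]
      exact hA0 _
    · exact h0
  · intro k hk hklt
    by_contra hkne
    exact Nat.find_min hP hklt ⟨hk, hkne⟩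

lemma lt_c_of_lex [LinearOrder α] (A : List α) (c : α) (n : ℕ)
    (hn : n < A.length) (hpos : 0 < n)
    (hagree : ∀ m (hm : m < A.length), m < n → A[m] = c) (hne : A[n] ≠ c)
    (hlex : List.Lex (· < ·) (A.rotate 1) A) : A[n] < c := by
  rcases lt_or_gt_of_ne hne with h | h
  · exact h
  · exfalso
    have hAB : List.Lex (· < ·) A (A.rotate 1) := by
      apply lex_of_getElem A (A.rotate 1) (n - 1) (by omega) (by simp; omega)
      · intro m hm h1 h2
        rw [List.getElem_rotate]
        have e1 := hagree m h1 (by omega)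
        have hm1 : (m + 1) % A.length = m + 1 := Nat.mod_eq_of_lt (by omega)
        have e2 := hagree ((m + 1) % A.length) (Nat.mod_lt _ (by omega)) (by rw [hm1]; omega)
        rw [e1, e2]
      · rw [List.getElem_rotate]
        have hAn1 : A[n - 1]'(by omega) = c := hagree (n - 1) (by omega) (by omega)
        have hkey : A[(n - 1 + 1) % A.length]'(Nat.mod_lt _ (by omega)) = A[n] := by
          congr 1
          rw [Nat.sub_add_cancel hpos]
          exact Nat.mod_eq_of_lt hn
        rw [hAn1, hkey]
        exact h
    exact asymm hAB hlex

lemma gt_c_of_lex [LinearOrder α] (A : List α) (c : α) (n : ℕ)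
    (hn : n < A.length) (hpos : 0 < n)
    (hagree : ∀ m (hm : m < A.length), m < n → A[m] = c) (hne : A[n] ≠ c)
    (hlex : List.Lex (· < ·) A (A.rotate 1)) : c < A[n] := by
  rcases lt_or_gt_of_ne hne with h | h
  · exfalso
    have hBA : List.Lex (· < ·) (A.rotate 1) A := by
      apply lex_of_getElem (A.rotate 1) A (n - 1) (by simp; omega) (by omega)
      · intro m hm h1 h2
        rw [List.getElem_rotate]
        have e1 := hagree m h2 (by omega)
        have hm1 : (m + 1) % A.length = m + 1 := Nat.mod_eq_of_lt (by omega)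
        have e2 := hagree ((m + 1) % A.length) (Nat.mod_lt _ (by omega)) (by rw [hm1]; omega)
        rw [e1, e2]
      · rw [List.getElem_rotate]
        have hAn1 : A[n - 1]'(by omega) = c := hagree (n - 1) (by omega) (by omega)
        have hkey : A[(n - 1 + 1) % A.length]'(Nat.mod_lt _ (by omega)) = A[n] := by
          congr 1
          rw [Nat.sub_add_cancel hpos]
          exact Nat.mod_eq_of_lt hn
        rw [hAn1, hkey]
        exact h
    exact asymm hBA hlex
  · exact h

end Aux

/-- For primitive strings `U`, `V` of length `≥ 2`, positions
`1 ≤ i ≤ |U|`, `1 ≤ j ≤ |V|` with `U[i] = V[j] = c`, if `i` is cyclic L-type in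
`U` and `j` is cyclic S-type in `V`, then `conj_i(U) ≺_ω c ≺_ω conj_j(V)`,
where `c` is regarded as a string of length 1. -/
theorem omegaLt_of_lType_sType_char {α : Type*} [LinearOrder α] (U V : List α)
    (hU : IsPrimitiveStr U) (hV : IsPrimitiveStr V)
    (hU2 : 2 ≤ U.length) (hV2 : 2 ≤ V.length)
    (i j : ℕ) (hi1 : 1 ≤ i) (hi2 : i ≤ U.length) (hj1 : 1 ≤ j) (hj2 : j ≤ V.length)
    (c : α) (hUc : cyc U hU.1 i = c) (hVc : cyc V hV.1 j = c)
    (hL : LType U i) (hS : SType V j) :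
    OmegaLt (conj U i) [c] ∧ OmegaLt [c] (conj V j) := by
  constructor
  · -- conj U i ≺_ω [c]
    obtain ⟨n, hpos, hn, hagree, hne⟩ := exists_first_diff U hU hU2 i hi1 hi2 c hUc
    set A := conj U i with hAdef
    have hAlen : A.length = U.length := by simp [hAdef, conj]
    have hlex : List.Lex (· < ·) (A.rotate 1) A := by
      have hrot : conj U (i + 1) = A.rotate 1 := by
        simp only [hAdef, conj, List.rotate_rotate]
        congr 1
        omega
      rw [← hrot]
      exact hL
    have hAn := lt_c_of_lex A c n hn hpos hagree hne hlex
    refine ⟨conj_ne_nil hU.1 i, by simp, Or.inr ⟨n, ?_, ?_⟩⟩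
    · intro m hm
      have hm' : m % A.length = m := Nat.mod_eq_of_lt (by omega)
      simp only [omegaSeq, List.get_eq_getElem, List.length_singleton, Nat.mod_one,
        List.getElem_singleton]
      have := hagree (m % A.length) (Nat.mod_lt _ (by omega)) (by rw [hm']; omega)
      exact this
    · have hn' : n % A.length = n := Nat.mod_eq_of_lt hn
      simp only [omegaSeq, List.get_eq_getElem, List.length_singleton, Nat.mod_one,
        List.getElem_singleton]
      have hkey : A[n % A.length]'(Nat.mod_lt _ (by omega)) = A[n] := by
        congr 1
      rw [hkey]
      exact hAn
  · -- [c] ≺_ω conj V j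
    obtain ⟨n, hpos, hn, hagree, hne⟩ := exists_first_diff V hV hV2 j hj1 hj2 c hVc
    set A := conj V j with hAdef
    have hAlen : A.length = V.length := by simp [hAdef, conj]
    have hlex : List.Lex (· < ·) A (A.rotate 1) := by
      have hrot : conj V (j + 1) = A.rotate 1 := by
        simp only [hAdef, conj, List.rotate_rotate]
        congr 1
        omega
      rw [← hrot]
      exact hS
    have hAn := gt_c_of_lex A c n hn hpos hagree hne hlex
    refine ⟨by simp, conj_ne_nil hV.1 j, Or.inr ⟨n, ?_, ?_⟩⟩
    · intro m hm
      have hm' : m % A.length = m := Nat.mod_eq_of_lt (by omega)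
      simp only [omegaSeq, List.get_eq_getElem, List.length_singleton, Nat.mod_one,
        List.getElem_singleton]
      have := hagree (m % A.length) (Nat.mod_lt _ (by omega)) (by rw [hm']; omega)
      exact this.symm
    · simp only [omegaSeq, List.get_eq_getElem, List.length_singleton, Nat.mod_one,
        List.getElem_singleton]
      have hkey : A[n % A.length]'(Nat.mod_lt _ (by omega)) = A[n] := by
        congr 1
        exact Nat.mod_eq_of_lt hn
      rw [hkey]
      exact hAn
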